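/- Let F be a non-meager P-filter on ω extending the Fréchet filter. Then the countable power F^ω (with the product topology, F carrying the subspace topology from 2^ω) is countable dense homogeneous. -/

import Mathlib

open Set

/-- A point of the Cantor space `α → Bool`, viewed as a subset of `α`
(the identification of `2^ω` with `𝒫(ω)` via characteristic functions). -/
def toSet {α : Type*} (x : α → Bool) : Set α := {a | x a = true}

/-- The copy of a family `F ⊆ 𝒫(α)` inside the Cantor space `α → Bool`. -/
def cantorCopy {α : Type*} (F : Set (Set α)) : Set (α → Bool) := toSet ⁻¹' F

/-- `F` is a filter on `α`: contains the whole set, not `∅`, closed under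
finite intersections and supersets. -/
def IsFilterOn {α : Type*} (F : Set (Set α)) : Prop :=
  Set.univ ∈ F ∧ ∅ ∉ F ∧ (∀ A B : Set α, A ∈ F → B ∈ F → A ∩ B ∈ F) ∧
    ∀ A B : Set α, A ∈ F → A ⊆ B → B ∈ F

/-- `F` extends the Fréchet filter: every cofinite set belongs to `F`. -/
def ExtendsFrechet {α : Type*} (F : Set (Set α)) : Prop :=
  ∀ A : Set α, Aᶜ.Finite → A ∈ F

/-- `F` is a P-filter: every countable subfamily has a pseudo-intersection in `F`. -/
def IsPFilterOn {α : Type*} (F : Set (Set α)) : Prop :=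
  ∀ X : ℕ → Set α, (∀ n, X n ∈ F) → ∃ Y ∈ F, ∀ n, (Y \ X n).Finite

/-- `F` is non-meager as a subset of the Cantor space `α → Bool`. -/
def NonMeagerFamily {α : Type*} (F : Set (Set α)) : Prop :=
  ¬ IsMeagre (cantorCopy F)

/-- `I` is an ideal on `α`: contains `∅`, not the whole set, closed under
finite unions and subsets. -/
def IsIdealOn {α : Type*} (I : Set (Set α)) : Prop :=
  ∅ ∈ I ∧ Set.univ ∉ I ∧ (∀ A B : Set α, A ∈ I → B ∈ I → A ∪ B ∈ I) ∧
    ∀ A B : Set α, A ∈ I → B ⊆ A → B ∈ I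

/-- `I` contains all finite sets. -/
def ContainsFinites {α : Type*} (I : Set (Set α)) : Prop :=
  ∀ A : Set α, A.Finite → A ∈ I

/-- `I` is a P-ideal: every countable subfamily has a member of `I`
almost containing each of them. -/
def IsPIdealOn {α : Type*} (I : Set (Set α)) : Prop :=
  ∀ X : ℕ → Set α, (∀ n, X n ∈ I) → ∃ Y ∈ I, ∀ n, (X n \ Y).Finite

/-- A topological space is countable dense homogeneous. -/
def CDH (X : Type*) [TopologicalSpace X] : Prop :=
  ∀ D E : Set X, D.Countable → Dense D → E.Countable → Dense E →
    ∃ h : X ≃ₜ X, h '' D = E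

/-- `D` is a (set-theoretic) subfamily of `F` that is dense in `F` with respect to
the subspace topology `F` inherits from the Cantor space. -/
def DenseIn {α : Type*} (D F : Set (Set α)) : Prop :=
  D ⊆ F ∧ cantorCopy F ⊆ closure (cantorCopy D)
-- ================= Part 1: utilities =================
open Classical in
noncomputable section

namespace CDHAux

abbrev C := ℕ → Bool

/-- cylinders are open -/
lemma cyl_open (x : C) (m : ℕ) : IsOpen {y : C | Set.EqOn y x (Set.Iio m)} := by
  have : {y : C | Set.EqOn y x (Set.Iio m)} = Set.pi (Set.Iio m) (fun n => {x n}) := by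
    ext y
    simp [Set.EqOn, Set.mem_pi]
  rw [this]
  exact isOpen_set_pi (Set.finite_Iio m) (fun a _ => isOpen_discrete _)

lemma fin_bound {s : Set ℕ} (h : s.Finite) : ∃ b, ∀ n ∈ s, n < b := by
  obtain ⟨b, hb⟩ := h.bddAbove
  exact ⟨b + 1, fun n hn => Nat.lt_succ_of_le (hb hn)⟩

section Filter
variable {G : Set (Set ℕ)} (hG : IsFilterOn G) (hFr : ExtendsFrechet G)

include hG in
lemma mem_of_superset {A B : Set ℕ} (hA : A ∈ G) (h : A ⊆ B) : B ∈ G := hG.2.2.2 A B hA h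

include hG in
lemma inter_mem {A B : Set ℕ} (hA : A ∈ G) (hB : B ∈ G) : A ∩ B ∈ G := hG.2.2.1 A B hA hB

include hG hFr in
lemma diff_fin_mem {A : Set ℕ} (hA : A ∈ G) {t : Set ℕ} (ht : t.Finite) : A \ t ∈ G := by
  have h1 : tᶜ ∈ G := hFr _ (by simpa using ht)
  exact hG.2.2.1 _ _ hA h1

end Filter

/-- a list-bound lemma: witnesses for finitely many existentials can be bounded -/
lemma list_bound {α : Type*} (M : List α) (P : α → ℕ → Prop)
    (h : ∀ a ∈ M, ∃ n, P a n) : ∃ b, ∀ a ∈ M, ∃ n < b, P a n := by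
  induction M with
  | nil => exact ⟨0, by simp⟩
  | cons a t ih =>
    obtain ⟨b, hb⟩ := ih (fun x hx => h x (List.mem_cons_of_mem a hx))
    obtain ⟨n, hn⟩ := h a (List.mem_cons_self)
    refine ⟨max b (n+1), ?_⟩
    intro x hx
    rw [List.mem_cons] at hx
    rcases hx with rfl | hx
    · exact ⟨n, lt_of_lt_of_le (Nat.lt_succ_self n) (le_max_right _ _), hn⟩
    · obtain ⟨n', hn', hP⟩ := hb x hx
      exact ⟨n', lt_of_lt_of_le hn' (le_max_left _ _), hP⟩

/-- pigeonhole: injective tuple avoiding a short list -/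
lemma avoid_list {α : Type*} (A : List α) (f : Fin (A.length + 1) → α)
    (hf : Function.Injective f) : ∃ j, f j ∉ A := by
  classical
  by_contra h
  push_neg at h
  have h2 : ∀ j, f j ∈ A.toFinset := fun j => List.mem_toFinset.2 (h j)
  have := Finset.card_le_card_of_injOn (s := (Finset.univ : Finset (Fin (A.length+1)))) (t := A.toFinset) f (fun j _ => h2 j) (hf.injOn)
  simp only [Finset.card_univ, Fintype.card_fin] at this
  have := this.trans (A.toFinset_card_le)
  omega

/-- the permutation-with-constraints lemma -/
lemma perm_exists {V : Type*} [DecidableEq V] (tr : V → V)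
    (L : List (V × V)) (hL : ∀ pr ∈ L, tr pr.1 = tr pr.2)
    (h1 : L.Pairwise (fun a b => a.1 ≠ b.1)) (h2 : L.Pairwise (fun a b => a.2 ≠ b.2)) :
    ∃ Ψ : Equiv.Perm V, (∀ pr ∈ L, Ψ pr.1 = pr.2) ∧ ∀ v, tr (Ψ v) = tr v := by
  induction L with
  | nil => exact ⟨Equiv.refl V, by simp, by simp⟩
  | cons hd t ih =>
    obtain ⟨Ψ, hc, htr⟩ := ih (fun pr hpr => hL pr (List.mem_cons_of_mem _ hpr))
      (List.Pairwise.of_cons h1) (List.Pairwise.of_cons h2)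
    refine ⟨Ψ.trans (Equiv.swap (Ψ hd.1) hd.2), ?_, ?_⟩
    · intro pr hpr
      rw [List.mem_cons] at hpr
      rcases hpr with rfl | hpr
      · simp [Equiv.swap_apply_left]
      · have e1 : Ψ pr.1 = pr.2 := hc pr hpr
        have ne1 : Ψ pr.1 ≠ Ψ hd.1 := by
          intro hcon
          exact ((List.pairwise_cons.1 h1).1 pr hpr) (Ψ.injective hcon).symm
        have ne2 : Ψ pr.1 ≠ hd.2 := by
          rw [e1]; exact fun hcon => ((List.pairwise_cons.1 h2).1 pr hpr) hcon.symm
        rw [Equiv.trans_apply, Equiv.swap_apply_of_ne_of_ne ne1 ne2, e1]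
    · intro v
      have key : tr (Ψ hd.1) = tr hd.2 := by rw [htr hd.1]; exact hL hd List.mem_cons_self
      simp only [Equiv.trans_apply]
      rcases eq_or_ne (Ψ v) (Ψ hd.1) with hv | hv
      · rw [hv, Equiv.swap_apply_left, ← key, ← hv, htr]
      · rcases eq_or_ne (Ψ v) hd.2 with hv2 | hv2
        · rw [hv2, Equiv.swap_apply_right, key, ← hv2, htr]
        · rw [Equiv.swap_apply_of_ne_of_ne hv hv2, htr]

end CDHAux
end
-- ================= Part 2: local bijections =================
noncomputable section
namespace CDHAux
open Set

def liftFun (m : ℕ) (Ψ : (Fin m → Bool) → (Fin m → Bool)) (x : C) : C :=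
  fun n => if h : n < m then Ψ (fun i => x i) ⟨n, h⟩ else x n

def restr (m : ℕ) (x : C) : Fin m → Bool := fun i => x i

lemma liftFun_lt {m : ℕ} {Ψ} (x : C) {n : ℕ} (h : n < m) :
    liftFun m Ψ x n = Ψ (restr m x) ⟨n, h⟩ := dif_pos h

lemma liftFun_ge {m : ℕ} {Ψ} (x : C) {n : ℕ} (h : m ≤ n) :
    liftFun m Ψ x n = x n := dif_neg (Nat.not_lt.2 h)

lemma restr_liftFun {m : ℕ} {Ψ} (x : C) : restr m (liftFun m Ψ x) = Ψ (restr m x) := by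
  funext i
  show liftFun m Ψ x i = _
  rw [liftFun_lt x i.isLt]

lemma liftFun_inv {m : ℕ} {Ψ Φ : (Fin m → Bool) → (Fin m → Bool)}
    (h : ∀ v, Φ (Ψ v) = v) (x : C) : liftFun m Φ (liftFun m Ψ x) = x := by
  funext n
  by_cases hn : n < m
  · rw [liftFun_lt _ hn, restr_liftFun, h]; rfl
  · rw [liftFun_ge _ (Nat.not_lt.1 hn), liftFun_ge _ (Nat.not_lt.1 hn)]

-- the "trace" map on patterns: keep coordinates below `μ` or in `X'`
open Classical in
def trmap (X' : Set ℕ) (μ m : ℕ) : (Fin m → Bool) → (Fin m → Bool) :=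
  fun p i => if ((i : ℕ) < μ ∨ (i : ℕ) ∈ X') then p i else false

open Classical in
lemma trmap_apply (X' : Set ℕ) (μ m : ℕ) (p : Fin m → Bool) (i : Fin m) :
    trmap X' μ m p i = if ((i : ℕ) < μ ∨ (i : ℕ) ∈ X') then p i else false := rfl

lemma trmap_keep {X' : Set ℕ} {μ m : ℕ} {Ψ : (Fin m → Bool) → (Fin m → Bool)}
    (hΨ : ∀ v, trmap X' μ m (Ψ v) = trmap X' μ m v) (p : Fin m → Bool) (i : Fin m)
    (hi : (i : ℕ) < μ ∨ (i : ℕ) ∈ X') : Ψ p i = p i := by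
  have h := congrFun (hΨ p) i
  rw [trmap_apply, trmap_apply, if_pos hi, if_pos hi] at h
  exact h

lemma liftFun_keep {X' : Set ℕ} {μ m : ℕ} {Ψ : (Fin m → Bool) → (Fin m → Bool)}
    (hΨ : ∀ v, trmap X' μ m (Ψ v) = trmap X' μ m v) (x : C) (n : ℕ)
    (hkeep : n < μ ∨ n ∈ X') : liftFun m Ψ x n = x n := by
  by_cases hn : n < m
  · rw [liftFun_lt _ hn]
    exact trmap_keep hΨ (restr m x) ⟨n, hn⟩ hkeep
  · exact liftFun_ge _ (Nat.not_lt.1 hn)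

lemma liftFun_congr {m : ℕ} {Ψ} {x y : C} (h : Set.EqOn x y (Set.Iio m)) {n : ℕ} (hn : n < m) :
    liftFun m Ψ x n = liftFun m Ψ y n := by
  have : restr m x = restr m y := by
    funext i
    exact h (Set.mem_Iio.2 i.isLt)
  rw [liftFun_lt _ hn, liftFun_lt _ hn, this]

/-- invariants of a stage-`μ` local homeomorphism pair -/
structure Good (X' : Set ℕ) (μ : ℕ) (H K : C → C) : Prop where
  hi : ∀ x, ∀ n, μ ≤ n → H x n = x n
  ki : ∀ x, ∀ n, μ ≤ n → K x n = x n
  hloc : ∀ x y, Set.EqOn x y (Set.Iio μ) → Set.EqOn (H x) (H y) (Set.Iio μ)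
  kloc : ∀ x y, Set.EqOn x y (Set.Iio μ) → Set.EqOn (K x) (K y) (Set.Iio μ)
  hk : ∀ x, K (H x) = x
  kh : ∀ x, H (K x) = x
  htr : ∀ x, ∀ n, n ∈ X' → H x n = x n

namespace Good

variable {X' : Set ℕ} {μ : ℕ} {H K : C → C}

lemma ktr (g : Good X' μ H K) (x : C) (n : ℕ) (hn : n ∈ X') : K x n = x n := by
  conv_rhs => rw [← g.kh x]
  rw [g.htr _ _ hn]

lemma hloc' (g : Good X' μ H K) {μ' : ℕ} (hμ : μ ≤ μ') {x y : C}
    (h : Set.EqOn x y (Set.Iio μ')) : Set.EqOn (H x) (H y) (Set.Iio μ') := by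
  intro n hn
  rcases Nat.lt_or_ge n μ with h1 | h1
  · exact g.hloc x y (fun m hm => h (Set.mem_Iio.2 ((Set.mem_Iio.1 hm).trans_le hμ)))
      (Set.mem_Iio.2 h1)
  · rw [g.hi x n h1, g.hi y n h1]
    exact h hn

lemma kloc' (g : Good X' μ H K) {μ' : ℕ} (hμ : μ ≤ μ') {x y : C}
    (h : Set.EqOn x y (Set.Iio μ')) : Set.EqOn (K x) (K y) (Set.Iio μ') := by
  intro n hn
  rcases Nat.lt_or_ge n μ with h1 | h1
  · exact g.kloc x y (fun m hm => h (Set.mem_Iio.2 ((Set.mem_Iio.1 hm).trans_le hμ)))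
      (Set.mem_Iio.2 h1)
  · rw [g.ki x n h1, g.ki y n h1]
    exact h hn

end Good

lemma good_id (X' : Set ℕ) : Good X' 0 id id :=
  ⟨fun _ _ _ => rfl, fun _ _ _ => rfl, fun _ _ _ _ h => by simp at h,
   fun _ _ _ _ h => by simp at h, fun _ => rfl, fun _ => rfl, fun _ _ _ => rfl⟩

/-- The key extension step. -/
lemma ext_step (X' : Set ℕ) {μ μ' : ℕ} (hμ : μ ≤ μ') {H K : C → C} (g : Good X' μ H K)
    (M : List (C × C))
    (ha : ∀ pr ∈ M, Set.EqOn (H pr.1) pr.2 (Set.Iio μ))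
    (hb : ∀ pr ∈ M, ∀ n, n ∈ X' → μ ≤ n → n < μ' → pr.1 n = pr.2 n)
    (hc1 : M.Pairwise (fun a b => ¬ Set.EqOn a.1 b.1 (Set.Iio μ')))
    (hc2 : M.Pairwise (fun a b => ¬ Set.EqOn a.2 b.2 (Set.Iio μ'))) :
    ∃ H' K', Good X' μ' H' K' ∧ (∀ x, Set.EqOn (H' x) (H x) (Set.Iio μ)) ∧
      (∀ x, Set.EqOn (K' x) (K x) (Set.Iio μ)) ∧
      (∀ pr ∈ M, Set.EqOn (H' pr.1) pr.2 (Set.Iio μ')) := by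
  classical
  set tr := trmap X' μ μ' with htrdef
  set L := M.map (fun pr => (restr μ' (H pr.1), restr μ' pr.2)) with hLdef
  -- restrictions determine originals (through K) below μ'
  have key_inj : ∀ a b : C, restr μ' (H a) = restr μ' (H b) → Set.EqOn a b (Set.Iio μ') := by
    intro a b hre
    have h1 : Set.EqOn (H a) (H b) (Set.Iio μ') := fun n hn => by
      have := congrFun hre ⟨n, Set.mem_Iio.1 hn⟩
      exact this
    have h2 := g.kloc' hμ h1
    rw [g.hk, g.hk] at h2
    exact h2
  have hL : ∀ pr ∈ L, tr pr.1 = tr pr.2 := by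
    rintro pr hpr
    rw [hLdef, List.mem_map] at hpr
    obtain ⟨q, hq, rfl⟩ := hpr
    funext i
    rw [htrdef, trmap_apply, trmap_apply]
    by_cases hi : ((i : ℕ) < μ ∨ (i : ℕ) ∈ X')
    · rw [if_pos hi, if_pos hi]
      rcases hi with hi | hi
      · show H q.1 i = q.2 i
        exact ha q hq (Set.mem_Iio.2 hi)
      · show H q.1 i = q.2 i
        rw [g.htr _ _ hi]
        rcases Nat.lt_or_ge (i : ℕ) μ with h1 | h1
        · rw [← g.htr q.1 _ hi]
          exact ha q hq (Set.mem_Iio.2 h1)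
        · exact hb q hq i hi h1 i.isLt
    · rw [if_neg hi, if_neg hi]
  have h1 : L.Pairwise (fun a b => a.1 ≠ b.1) := by
    rw [hLdef, List.pairwise_map]
    refine hc1.imp_of_mem ?_
    intro a b _ _ hne hcon
    exact hne (key_inj a.1 b.1 hcon)
  have h2 : L.Pairwise (fun a b => a.2 ≠ b.2) := by
    rw [hLdef, List.pairwise_map]
    refine hc2.imp_of_mem ?_
    intro a b _ _ hne hcon
    refine hne (fun n hn => ?_)
    exact congrFun hcon ⟨n, Set.mem_Iio.1 hn⟩
  obtain ⟨Ψ, hΨc, hΨtr⟩ := perm_exists tr L hL h1 h2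
  have hΨstr : ∀ v, tr (Ψ.symm v) = tr v := by
    intro v
    conv_rhs => rw [← Ψ.apply_symm_apply v]
    rw [hΨtr]
  refine ⟨fun x => liftFun μ' Ψ (H x), fun x => K (liftFun μ' Ψ.symm x), ?_, ?_, ?_, ?_⟩
  · constructor
    · intro x n hn
      rw [liftFun_ge _ hn, g.hi x n (hμ.trans hn)]
    · intro x n hn
      rw [g.ki _ n (hμ.trans hn), liftFun_ge _ hn]
    · intro x y hxy n hn
      have h1 : Set.EqOn (H x) (H y) (Set.Iio μ') := g.hloc' hμ hxy
      exact liftFun_congr h1 (Set.mem_Iio.1 hn)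
    · intro x y hxy n hn
      refine g.kloc' hμ ?_ hn
      intro m hm
      exact liftFun_congr hxy (Set.mem_Iio.1 hm)
    · intro x
      rw [liftFun_inv (fun v => Ψ.symm_apply_apply v), g.hk]
    · intro x
      rw [g.kh, liftFun_inv (fun v => Ψ.apply_symm_apply v)]
    · intro x n hn
      rw [liftFun_keep hΨtr _ n (Or.inr hn), g.htr _ _ hn]
  · intro x n hn
    show liftFun μ' (⇑Ψ) (H x) n = H x n
    rw [liftFun_keep hΨtr _ n (Or.inl (Set.mem_Iio.1 hn))]
  · intro x n hn
    refine (g.kloc (liftFun μ' Ψ.symm x) x ?_) hn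
    intro m hm
    exact liftFun_keep hΨstr x m (Or.inl (Set.mem_Iio.1 hm))
  · intro pr hpr n hn
    have hmem : (restr μ' (H pr.1), restr μ' pr.2) ∈ L := by
      rw [hLdef, List.mem_map]
      exact ⟨pr, hpr, rfl⟩
    have h5 := hΨc _ hmem
    show liftFun μ' (⇑Ψ) (H pr.1) n = pr.2 n
    rw [liftFun_lt _ (Set.mem_Iio.1 hn)]
    exact congrFun h5 ⟨n, Set.mem_Iio.1 hn⟩
end CDHAux
end
-- ================= Part 3: the back-and-forth construction =================
noncomputable section
namespace CDHAux
open Set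

lemma getD_ofFn {m : ℕ} (f : Fin m → Bool) {i : ℕ} (h : i < m) (d : Bool) :
    (List.ofFn f).getD i d = f ⟨i, h⟩ := by
  rw [List.getD_eq_getElem _ _ (by simpa using h), List.getElem_ofFn]

/-- The context for a single application of the back-and-forth construction. -/
structure Ctx where
  G : Set (Set ℕ)
  hfil : IsFilterOn G
  d : ℕ → C
  e : ℕ → C
  hdG : ∀ r, toSet (d r) ∈ G
  heG : ∀ r, toSet (e r) ∈ G
  X' : Set ℕ
  hX'G : X' ∈ G
  hX'd : ∀ r, (X' \ toSet (d r)).Finite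
  hX'e : ∀ r, (X' \ toSet (e r)).Finite
  Rd : ∀ (t : List Bool) (A : List C), ∃ p ∈ Set.range d, p ∉ A ∧
        (∀ i, i < t.length → p i = t.getD i true) ∧ (∀ n ∈ X', t.length ≤ n → p n = true)
  Re : ∀ (t : List Bool) (A : List C), ∃ q ∈ Set.range e, q ∉ A ∧
        (∀ i, i < t.length → q i = t.getD i true) ∧ (∀ n ∈ X', t.length ≤ n → q n = true)

/-- a stage of the construction -/
structure St where
  μ : ℕ
  H : C → C
  K : C → C
  M : List (C × C)

variable (c : Ctx)

/-- validity of a stage -/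
structure StOK (S : St) : Prop where
  good : Good c.X' S.μ S.H S.K
  p1 : ∀ pr ∈ S.M, Set.EqOn (S.H pr.1) pr.2 (Set.Iio S.μ)
  p2 : ∀ pr ∈ S.M, ∀ n ∈ c.X', S.μ ≤ n → pr.1 n = pr.2 n
  p3 : S.M.Pairwise (fun a b => ¬ Set.EqOn a.1 b.1 (Set.Iio S.μ) ∧ ¬ Set.EqOn a.2 b.2 (Set.Iio S.μ))
  pd : ∀ pr ∈ S.M, pr.1 ∈ Set.range c.d ∧ pr.2 ∈ Set.range c.e

def StRel (s : ℕ) (S S' : St) : Prop :=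
  S.μ + 1 ≤ S'.μ ∧ (∀ x, Set.EqOn (S'.H x) (S.H x) (Set.Iio S.μ)) ∧
  (∀ x, Set.EqOn (S'.K x) (S.K x) (Set.Iio S.μ)) ∧
  (∀ pr ∈ S.M, pr ∈ S'.M) ∧
  (s % 2 = 0 → c.d (s/2) ∈ S'.M.map Prod.fst) ∧
  (s % 2 = 1 → c.e (s/2) ∈ S'.M.map Prod.snd)

lemma pad_step {S : St} (ok : StOK c S) (m : ℕ) :
    ∃ S' : St, StOK c S' ∧ S'.M = S.M ∧ max m (S.μ + 1) ≤ S'.μ ∧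
      (∀ x, Set.EqOn (S'.H x) (S.H x) (Set.Iio S.μ)) ∧
      (∀ x, Set.EqOn (S'.K x) (S.K x) (Set.Iio S.μ)) := by
  set μ' := max m (S.μ + 1) with hμ'
  have hle : S.μ ≤ μ' := le_trans (Nat.le_succ _) (le_max_right _ _)
  have hmono : Set.Iio S.μ ⊆ Set.Iio μ' := Set.Iio_subset_Iio hle
  obtain ⟨H', K', good', compatH, compatK, hcon⟩ :=
    ext_step c.X' hle ok.good S.M ok.p1
      (fun pr hpr n hn h1 _ => ok.p2 pr hpr n hn h1)
      (ok.p3.imp (fun h hcon => h.1 (hcon.mono hmono)))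
      (ok.p3.imp (fun h hcon => h.2 (hcon.mono hmono)))
  refine ⟨⟨μ', H', K', S.M⟩, ⟨good', hcon, ?_, ?_, ok.pd⟩, rfl, le_refl _, compatH, compatK⟩
  · exact fun pr hpr n hn h1 => ok.p2 pr hpr n hn (hle.trans h1)
  · exact ok.p3.imp (fun h => ⟨fun hcon => h.1 (hcon.mono hmono), fun hcon => h.2 (hcon.mono hmono)⟩)

lemma attach_step {S : St} (ok : StOK c S) (pnew qnew : C)
    (hnew : Set.EqOn (S.H pnew) qnew (Set.Iio S.μ))
    (htrp : ∀ n ∈ c.X', S.μ ≤ n → pnew n = true)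
    (htrq : ∀ n ∈ c.X', S.μ ≤ n → qnew n = true)
    (hfp : pnew ∉ S.M.map Prod.fst) (hfq : qnew ∉ S.M.map Prod.snd)
    (hpD : pnew ∈ Set.range c.d) (hqE : qnew ∈ Set.range c.e) :
    ∃ S' : St, StOK c S' ∧ S'.M = (pnew, qnew) :: S.M ∧ S.μ + 1 ≤ S'.μ ∧
      (∀ x, Set.EqOn (S'.H x) (S.H x) (Set.Iio S.μ)) ∧
      (∀ x, Set.EqOn (S'.K x) (S.K x) (Set.Iio S.μ)) := by
  have hd1 : ∀ pr ∈ S.M, ∃ n, pnew n ≠ pr.1 n := by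
    intro pr hpr
    have : pnew ≠ pr.1 := by
      intro hcon
      exact hfp (hcon ▸ List.mem_map_of_mem (f := Prod.fst) hpr)
    exact Function.ne_iff.1 this
  have hd2 : ∀ pr ∈ S.M, ∃ n, qnew n ≠ pr.2 n := by
    intro pr hpr
    have : qnew ≠ pr.2 := by
      intro hcon
      exact hfq (hcon ▸ List.mem_map_of_mem (f := Prod.snd) hpr)
    exact Function.ne_iff.1 this
  obtain ⟨b1, hb1⟩ := list_bound S.M _ hd1
  obtain ⟨b2, hb2⟩ := list_bound S.M _ hd2
  set μ' := max (max b1 b2) (S.μ + 1) with hμ'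
  have hle : S.μ ≤ μ' := le_trans (Nat.le_succ _) (le_max_right _ _)
  have hmono : Set.Iio S.μ ⊆ Set.Iio μ' := Set.Iio_subset_Iio hle
  have ha' : ∀ pr ∈ (pnew, qnew) :: S.M, Set.EqOn (S.H pr.1) pr.2 (Set.Iio S.μ) := by
    intro pr hpr
    rw [List.mem_cons] at hpr
    rcases hpr with rfl | hpr
    · exact hnew
    · exact ok.p1 pr hpr
  have hb' : ∀ pr ∈ (pnew, qnew) :: S.M, ∀ n, n ∈ c.X' → S.μ ≤ n → n < μ' → pr.1 n = pr.2 n := by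
    intro pr hpr n hn h1 _
    rw [List.mem_cons] at hpr
    rcases hpr with rfl | hpr
    · show pnew n = qnew n
      rw [htrp n hn h1, htrq n hn h1]
    · exact ok.p2 pr hpr n hn h1
  have hc1' : ((pnew, qnew) :: S.M).Pairwise (fun a b => ¬ Set.EqOn a.1 b.1 (Set.Iio μ')) := by
    rw [List.pairwise_cons]
    refine ⟨?_, ok.p3.imp (fun h hcon => h.1 (hcon.mono hmono))⟩
    intro pr hpr hcon
    obtain ⟨n, hn, hne⟩ := hb1 pr hpr
    exact hne (hcon (Set.mem_Iio.2 (lt_of_lt_of_le hn ((le_max_left b1 b2).trans (le_max_left _ _)))))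
  have hc2' : ((pnew, qnew) :: S.M).Pairwise (fun a b => ¬ Set.EqOn a.2 b.2 (Set.Iio μ')) := by
    rw [List.pairwise_cons]
    refine ⟨?_, ok.p3.imp (fun h hcon => h.2 (hcon.mono hmono))⟩
    intro pr hpr hcon
    obtain ⟨n, hn, hne⟩ := hb2 pr hpr
    exact hne (hcon (Set.mem_Iio.2 (lt_of_lt_of_le hn ((le_max_right b1 b2).trans (le_max_left _ _)))))
  obtain ⟨H', K', good', compatH, compatK, hcon⟩ :=
    ext_step c.X' hle ok.good ((pnew, qnew) :: S.M) ha' hb' hc1' hc2'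
  refine ⟨⟨μ', H', K', (pnew, qnew) :: S.M⟩, ⟨good', hcon, ?_, ?_, ?_⟩, rfl, le_max_right _ _,
    compatH, compatK⟩
  · intro pr hpr n hn h1
    rw [List.mem_cons] at hpr
    rcases hpr with rfl | hpr
    · show pnew n = qnew n
      rw [htrp n hn (hle.trans h1), htrq n hn (hle.trans h1)]
    · exact ok.p2 pr hpr n hn (hle.trans h1)
  · rw [List.pairwise_cons]
    constructor
    · intro pr hpr
      constructor
      · obtain ⟨n, hn, hne⟩ := hb1 pr hpr
        intro hcon
        exact hne (hcon (Set.mem_Iio.2 (lt_of_lt_of_le hn ((le_max_left b1 b2).trans (le_max_left _ _)))))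
      · obtain ⟨n, hn, hne⟩ := hb2 pr hpr
        intro hcon
        exact hne (hcon (Set.mem_Iio.2 (lt_of_lt_of_le hn ((le_max_right b1 b2).trans (le_max_left _ _)))))
    · exact ok.p3.imp (fun h => ⟨fun hcon => h.1 (hcon.mono hmono), fun hcon => h.2 (hcon.mono hmono)⟩)
  · intro pr hpr
    rw [List.mem_cons] at hpr
    rcases hpr with rfl | hpr
    · exact ⟨hpD, hqE⟩
    · exact ok.pd pr hpr

lemma modulus_bound {A : Set ℕ} (h : (c.X' \ A).Finite) : ∃ b, ∀ n ∈ c.X', b ≤ n → n ∈ A := by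
  obtain ⟨b, hb⟩ := fin_bound h
  refine ⟨b, fun n hn h1 => ?_⟩
  by_contra hcon
  exact absurd (hb n ⟨hn, hcon⟩) (Nat.not_lt.2 h1)

lemma step_exists (s : ℕ) (S : St) (ok : StOK c S) :
    ∃ S' : St, StOK c S' ∧ StRel c s S S' := by
  rcases Nat.even_or_odd s with hpar | hpar
  · -- even: treat d (s/2)
    set r := s / 2 with hr
    set p₀ := c.d r with hp₀
    obtain ⟨b₀, hb₀⟩ := modulus_bound c (c.hX'd r)
    obtain ⟨S₀, ok₀, hM₀, hμ₀, cH₀, cK₀⟩ := pad_step c ok b₀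
    have hμS₀ : S.μ + 1 ≤ S₀.μ := le_trans (le_max_right _ _) hμ₀
    have hb₀' : ∀ n ∈ c.X', S₀.μ ≤ n → p₀ n = true := by
      intro n hn h1
      exact hb₀ n hn (le_trans (le_trans (le_max_left _ _) hμ₀) h1)
    have hsmod : s % 2 = 0 := Nat.even_iff.1 hpar
    by_cases hmem : p₀ ∈ S₀.M.map Prod.fst
    · refine ⟨S₀, ok₀, hμS₀, cH₀, cK₀, ?_, fun _ => hmem, fun hcon => by omega⟩
      intro pr hpr
      rw [hM₀]; exact hpr
    · set t := List.ofFn (fun i : Fin S₀.μ => S₀.H p₀ i) with ht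
      have htlen : t.length = S₀.μ := by rw [ht, List.length_ofFn]
      obtain ⟨q, hqE, hqA, hqpre, hqtr⟩ := c.Re t (S₀.M.map Prod.snd)
      have hq1 : Set.EqOn (S₀.H p₀) q (Set.Iio S₀.μ) := by
        intro n hn
        have h2 := hqpre n (htlen ▸ Set.mem_Iio.1 hn)
        rw [h2, ht, getD_ofFn _ (Set.mem_Iio.1 hn)]
      obtain ⟨S', ok', hM', hμ', cH', cK'⟩ :=
        attach_step c ok₀ p₀ q hq1 hb₀' (fun n hn h1 => hqtr n hn (htlen ▸ h1)) hmem hqA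
          ⟨r, rfl⟩ hqE
      refine ⟨S', ok', by omega, ?_, ?_, ?_, ?_, fun hcon => by omega⟩
      · intro x n hn
        have hn₀ : n ∈ Set.Iio S₀.μ := Set.mem_Iio.2 (lt_of_lt_of_le (Set.mem_Iio.1 hn) (by omega))
        exact (cH' x hn₀).trans (cH₀ x hn)
      · intro x n hn
        have hn₀ : n ∈ Set.Iio S₀.μ := Set.mem_Iio.2 (lt_of_lt_of_le (Set.mem_Iio.1 hn) (by omega))
        exact (cK' x hn₀).trans (cK₀ x hn)
      · intro pr hpr
        rw [hM']
        exact List.mem_cons_of_mem _ (by rw [hM₀]; exact hpr)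
      · intro _
        rw [hM']
        exact List.mem_map.2 ⟨(p₀, q), List.mem_cons_self, rfl⟩
  · -- odd: treat e (s/2)
    set r := s / 2 with hr
    set q₀ := c.e r with hq₀
    obtain ⟨b₀, hb₀⟩ := modulus_bound c (c.hX'e r)
    obtain ⟨S₀, ok₀, hM₀, hμ₀, cH₀, cK₀⟩ := pad_step c ok b₀
    have hμS₀ : S.μ + 1 ≤ S₀.μ := le_trans (le_max_right _ _) hμ₀
    have hb₀' : ∀ n ∈ c.X', S₀.μ ≤ n → q₀ n = true := by
      intro n hn h1
      exact hb₀ n hn (le_trans (le_trans (le_max_left _ _) hμ₀) h1)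
    have hsmod : s % 2 = 1 := Nat.odd_iff.1 hpar
    by_cases hmem : q₀ ∈ S₀.M.map Prod.snd
    · refine ⟨S₀, ok₀, hμS₀, cH₀, cK₀, ?_, fun hcon => by omega, fun _ => hmem⟩
      intro pr hpr
      rw [hM₀]; exact hpr
    · set t := List.ofFn (fun i : Fin S₀.μ => S₀.K q₀ i) with ht
      have htlen : t.length = S₀.μ := by rw [ht, List.length_ofFn]
      obtain ⟨p, hpD, hpA, hppre, hptr⟩ := c.Rd t (S₀.M.map Prod.fst)
      have hpk : Set.EqOn p (S₀.K q₀) (Set.Iio S₀.μ) := by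
        intro n hn
        have h2 := hppre n (htlen ▸ Set.mem_Iio.1 hn)
        rw [h2, ht, getD_ofFn _ (Set.mem_Iio.1 hn)]
      have hq1 : Set.EqOn (S₀.H p) q₀ (Set.Iio S₀.μ) := by
        intro n hn
        have h3 := ok₀.good.hloc p (S₀.K q₀) hpk hn
        rw [h3, ok₀.good.kh]
      obtain ⟨S', ok', hM', hμ', cH', cK'⟩ :=
        attach_step c ok₀ p q₀ hq1 (fun n hn h1 => hptr n hn (htlen ▸ h1)) hb₀' hpA hmem
          hpD ⟨r, rfl⟩
      refine ⟨S', ok', by omega, ?_, ?_, ?_, fun hcon => by omega, ?_⟩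
      · intro x n hn
        have hn₀ : n ∈ Set.Iio S₀.μ := Set.mem_Iio.2 (lt_of_lt_of_le (Set.mem_Iio.1 hn) (by omega))
        exact (cH' x hn₀).trans (cH₀ x hn)
      · intro x n hn
        have hn₀ : n ∈ Set.Iio S₀.μ := Set.mem_Iio.2 (lt_of_lt_of_le (Set.mem_Iio.1 hn) (by omega))
        exact (cK' x hn₀).trans (cK₀ x hn)
      · intro pr hpr
        rw [hM']
        exact List.mem_cons_of_mem _ (by rw [hM₀]; exact hpr)
      · intro _
        rw [hM']
        exact List.mem_map.2 ⟨(p, q₀), List.mem_cons_self, rfl⟩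

end CDHAux
end
-- ================= Part 4: the limit homeomorphism =================
noncomputable section
namespace CDHAux
open Set

variable (c : Ctx)

lemma ok0 : StOK c ⟨0, id, id, []⟩ :=
  ⟨good_id c.X', by simp, by simp, List.Pairwise.nil, by simp⟩

noncomputable def chain : ℕ → {S : St // StOK c S}
  | 0 => ⟨⟨0, id, id, []⟩, ok0 c⟩
  | (s+1) => ⟨(step_exists c s (chain s).1 (chain s).2).choose,
      (step_exists c s (chain s).1 (chain s).2).choose_spec.1⟩

lemma chain_rel (s : ℕ) : StRel c s (chain c s).1 (chain c (s+1)).1 :=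
  (step_exists c s (chain c s).1 (chain c s).2).choose_spec.2

lemma chain_mu_mono : Monotone (fun s => (chain c s).1.μ) := by
  apply monotone_nat_of_le_succ
  intro s
  exact le_trans (Nat.le_succ _) (chain_rel c s).1

lemma chain_mu_ge (s : ℕ) : s ≤ (chain c s).1.μ := by
  induction s with
  | zero => exact Nat.zero_le _
  | succ n ih => exact le_trans (Nat.succ_le_succ ih) (chain_rel c n).1

lemma chain_M_mono {s t : ℕ} (h : s ≤ t) : ∀ pr ∈ (chain c s).1.M, pr ∈ (chain c t).1.M := by
  induction t with
  | zero =>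
    intro pr hpr
    rw [Nat.le_zero.1 h] at hpr
    exact hpr
  | succ n ih =>
    rcases Nat.lt_or_ge s (n+1) with h1 | h1
    · intro pr hpr
      exact (chain_rel c n).2.2.2.1 pr (ih (Nat.lt_succ_iff.1 h1) pr hpr)
    · intro pr hpr
      have : s = n + 1 := le_antisymm h h1
      rw [this] at hpr
      exact hpr

lemma chain_compatH {s t : ℕ} (h : s ≤ t) :
    ∀ x, Set.EqOn ((chain c t).1.H x) ((chain c s).1.H x) (Set.Iio (chain c s).1.μ) := by
  induction t with
  | zero =>
    intro x
    rw [Nat.le_zero.1 h]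
    exact fun n _ => rfl
  | succ n ih =>
    rcases Nat.lt_or_ge s (n+1) with h1 | h1
    · intro x n' hn'
      have h2 : Set.Iio (chain c s).1.μ ⊆ Set.Iio (chain c n).1.μ :=
        Set.Iio_subset_Iio (chain_mu_mono c (Nat.lt_succ_iff.1 h1))
      exact ((chain_rel c n).2.1 x (h2 hn')).trans (ih (Nat.lt_succ_iff.1 h1) x hn')
    · have : s = n + 1 := le_antisymm h h1
      subst this
      exact fun x n _ => rfl

lemma chain_compatK {s t : ℕ} (h : s ≤ t) :
    ∀ x, Set.EqOn ((chain c t).1.K x) ((chain c s).1.K x) (Set.Iio (chain c s).1.μ) := by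
  induction t with
  | zero =>
    intro x
    rw [Nat.le_zero.1 h]
    exact fun n _ => rfl
  | succ n ih =>
    rcases Nat.lt_or_ge s (n+1) with h1 | h1
    · intro x n' hn'
      have h2 : Set.Iio (chain c s).1.μ ⊆ Set.Iio (chain c n).1.μ :=
        Set.Iio_subset_Iio (chain_mu_mono c (Nat.lt_succ_iff.1 h1))
      exact ((chain_rel c n).2.2.1 x (h2 hn')).trans (ih (Nat.lt_succ_iff.1 h1) x hn')
    · have : s = n + 1 := le_antisymm h h1
      subst this
      exact fun x n _ => rfl

/-- the limit maps -/
noncomputable def hmap (x : C) : C := fun n => (chain c (n+1)).1.H x n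
noncomputable def kmap (x : C) : C := fun n => (chain c (n+1)).1.K x n

lemma n_lt_mu (n : ℕ) : n < (chain c (n+1)).1.μ := lt_of_lt_of_le (Nat.lt_succ_self n) (chain_mu_ge c (n+1))

lemma hmap_eq (s : ℕ) (x : C) {n : ℕ} (hn : n < (chain c s).1.μ) :
    hmap c x n = (chain c s).1.H x n := by
  rcases Nat.le_total (n+1) s with h | h
  · exact ((chain_compatH c h x) (Set.mem_Iio.2 (n_lt_mu c n))).symm
  · exact (chain_compatH c h x) (Set.mem_Iio.2 hn)

lemma kmap_eq (s : ℕ) (x : C) {n : ℕ} (hn : n < (chain c s).1.μ) :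
    kmap c x n = (chain c s).1.K x n := by
  rcases Nat.le_total (n+1) s with h | h
  · exact ((chain_compatK c h x) (Set.mem_Iio.2 (n_lt_mu c n))).symm
  · exact (chain_compatK c h x) (Set.mem_Iio.2 hn)

lemma kh_inv (x : C) : kmap c (hmap c x) = x := by
  funext n
  set s := n + 1
  have h1 : Set.EqOn (hmap c x) ((chain c s).1.H x) (Set.Iio (chain c s).1.μ) := by
    intro m hm
    exact hmap_eq c s x (Set.mem_Iio.1 hm)
  have h2 := (chain c s).2.good.kloc (hmap c x) ((chain c s).1.H x) h1 (Set.mem_Iio.2 (n_lt_mu c n))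
  show (chain c s).1.K (hmap c x) n = x n
  rw [h2, (chain c s).2.good.hk]

lemma hk_inv (x : C) : hmap c (kmap c x) = x := by
  funext n
  set s := n + 1
  have h1 : Set.EqOn (kmap c x) ((chain c s).1.K x) (Set.Iio (chain c s).1.μ) := by
    intro m hm
    exact kmap_eq c s x (Set.mem_Iio.1 hm)
  have h2 := (chain c s).2.good.hloc (kmap c x) ((chain c s).1.K x) h1 (Set.mem_Iio.2 (n_lt_mu c n))
  show (chain c s).1.H (kmap c x) n = x n
  rw [h2, (chain c s).2.good.kh]

lemma hmap_tr (x : C) {n : ℕ} (hn : n ∈ c.X') : hmap c x n = x n :=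
  (chain c (n+1)).2.good.htr x n hn

lemma hmap_cont : Continuous (hmap c) := by
  apply continuous_pi
  intro n
  apply IsLocallyConstant.continuous
  intro s
  rw [isOpen_iff_mem_nhds]
  intro x hx
  have hopen := cyl_open x (chain c (n+1)).1.μ
  refine Filter.mem_of_superset (hopen.mem_nhds (fun m _ => rfl)) ?_
  intro y hy
  have : (chain c (n+1)).1.H y n = (chain c (n+1)).1.H x n :=
    (chain c (n+1)).2.good.hloc y x hy (Set.mem_Iio.2 (n_lt_mu c n))
  show (fun x => hmap c x n) y ∈ s
  simpa [hmap, this] using hx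

lemma kmap_cont : Continuous (kmap c) := by
  apply continuous_pi
  intro n
  apply IsLocallyConstant.continuous
  intro s
  rw [isOpen_iff_mem_nhds]
  intro x hx
  have hopen := cyl_open x (chain c (n+1)).1.μ
  refine Filter.mem_of_superset (hopen.mem_nhds (fun m _ => rfl)) ?_
  intro y hy
  have : (chain c (n+1)).1.K y n = (chain c (n+1)).1.K x n :=
    (chain c (n+1)).2.good.kloc y x hy (Set.mem_Iio.2 (n_lt_mu c n))
  show (fun x => kmap c x n) y ∈ s
  simpa [kmap, this] using hx

lemma hmap_pair {s : ℕ} {pr : C × C} (hpr : pr ∈ (chain c s).1.M) : hmap c pr.1 = pr.2 := by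
  funext n
  set t := max s (n+1) with htdef
  have hprt : pr ∈ (chain c t).1.M := chain_M_mono c (le_max_left _ _) pr hpr
  have hnt : n < (chain c t).1.μ :=
    lt_of_lt_of_le (lt_of_lt_of_le (Nat.lt_succ_self n) (chain_mu_ge c (n+1)))
      (chain_mu_mono c (le_max_right _ _))
  rw [hmap_eq c t pr.1 hnt]
  exact (chain c t).2.p1 pr hprt (Set.mem_Iio.2 hnt)

lemma hmap_image : (hmap c) '' (Set.range c.d) = Set.range c.e := by
  apply Set.Subset.antisymm
  · rintro y ⟨x, ⟨r, rfl⟩, rfl⟩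
    have h1 := (chain_rel c (2*r)).2.2.2.2.1 (by omega)
    have hr : 2 * r / 2 = r := by omega
    rw [hr] at h1
    rw [List.mem_map] at h1
    obtain ⟨pr, hpr, hfst⟩ := h1
    have := hmap_pair c hpr
    rw [← hfst, this]
    exact ((chain c (2*r+1)).2.pd pr hpr).2
  · rintro y ⟨r, rfl⟩
    have h1 := (chain_rel c (2*r+1)).2.2.2.2.2 (by omega)
    have hr : (2 * r + 1) / 2 = r := by omega
    rw [hr] at h1
    rw [List.mem_map] at h1
    obtain ⟨pr, hpr, hsnd⟩ := h1
    obtain ⟨rd, hrd⟩ := ((chain c (2*r+1+1)).2.pd pr hpr).1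
    refine ⟨pr.1, ⟨rd, hrd⟩, ?_⟩
    rw [hmap_pair c hpr, hsnd]

lemma hmap_G_iff (x : C) : toSet x ∈ c.G ↔ toSet (hmap c x) ∈ c.G := by
  have hXcap : toSet (hmap c x) ∩ c.X' = toSet x ∩ c.X' := by
    ext n
    constructor
    · rintro ⟨h1, h2⟩
      refine ⟨?_, h2⟩
      show x n = true
      rw [← hmap_tr c x h2]
      exact h1
    · rintro ⟨h1, h2⟩
      refine ⟨?_, h2⟩
      show hmap c x n = true
      rw [hmap_tr c x h2]
      exact h1
  constructor
  · intro hx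
    have h1 : toSet x ∩ c.X' ∈ c.G := inter_mem c.hfil hx c.hX'G
    rw [← hXcap] at h1
    exact mem_of_superset c.hfil h1 (Set.inter_subset_left)
  · intro hx
    have h1 : toSet (hmap c x) ∩ c.X' ∈ c.G := inter_mem c.hfil hx c.hX'G
    rw [hXcap] at h1
    exact mem_of_superset c.hfil h1 (Set.inter_subset_left)

/-- the limit homeomorphism of Cantor space -/
noncomputable def bfHomeo : (ℕ → Bool) ≃ₜ (ℕ → Bool) where
  toFun := hmap c
  invFun := kmap c
  left_inv := kh_inv c
  right_inv := hk_inv c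
  continuous_toFun := hmap_cont c
  continuous_invFun := kmap_cont c

lemma ctx_main : ∃ h : (ℕ → Bool) ≃ₜ (ℕ → Bool),
    (∀ x : ℕ → Bool, toSet x ∈ c.G ↔ toSet (h x) ∈ c.G) ∧
    (⇑h) '' (Set.range c.d) = Set.range c.e :=
  ⟨bfHomeo c, fun x => hmap_G_iff c x, hmap_image c⟩

end CDHAux
end
-- ================= Part 5: building the context =================
noncomputable section
namespace CDHAux
open Set

lemma mem_toSet {x : C} {n : ℕ} : n ∈ toSet x ↔ x n = true := Iff.rfl

/-- the canonical point of the Cantor space with a given finite pattern and all-true tail -/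
def ptC (t : List Bool) : C := fun n => t.getD n true

lemma ptC_memG {G : Set (Set ℕ)} (hfre : ExtendsFrechet G) (t : List Bool) :
    toSet (ptC t) ∈ G := by
  apply hfre
  apply Set.Finite.subset (Set.finite_Iio t.length)
  intro n hn
  rw [Set.mem_compl_iff] at hn
  by_contra hcon
  rw [Set.mem_Iio, Nat.not_lt] at hcon
  exact hn (List.getD_eq_default _ _ hcon)

/-- helper recursion for interval endpoints -/
def recb (g : ℕ → ℕ → ℕ) : ℕ → ℕ
  | 0 => 0
  | (p+1) => max (recb g p + 1) (1 + g p (recb g p))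

lemma infinite_of_unbdd {s : Set ℕ} (h : ∀ N, ∃ n, N ≤ n ∧ n ∈ s) : s.Infinite := by
  by_contra hfin
  rw [Set.not_infinite] at hfin
  obtain ⟨b, hb⟩ := fin_bound hfin
  obtain ⟨n, h1, h2⟩ := h b
  exact absurd (hb n h2) (by omega)

theorem build_ctx {G : Set (Set ℕ)} (hfil : IsFilterOn G) (hfre : ExtendsFrechet G)
    (hP : IsPFilterOn G)
    (hTAL : ∀ b : ℕ → ℕ, StrictMono b → b 0 = 0 →
      ∃ X ∈ G, {p | X ∩ Set.Ico (b p) (b (p+1)) = ∅}.Infinite)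
    (d e : ℕ → C) (hdG : ∀ r, toSet (d r) ∈ G) (heG : ∀ r, toSet (e r) ∈ G)
    (hdDense : ∀ z : C, toSet z ∈ G → ∀ m : ℕ, ∃ r, Set.EqOn (d r) z (Set.Iio m))
    (heDense : ∀ z : C, toSet z ∈ G → ∀ m : ℕ, ∃ r, Set.EqOn (e r) z (Set.Iio m)) :
    ∃ X' : Set ℕ, X' ∈ G ∧ (∀ r, (X' \ toSet (d r)).Finite) ∧ (∀ r, (X' \ toSet (e r)).Finite) ∧
    (∀ (t : List Bool) (A : List C), ∃ p ∈ Set.range d, p ∉ A ∧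
      (∀ i, i < t.length → p i = t.getD i true) ∧ (∀ n ∈ X', t.length ≤ n → p n = true)) ∧
    (∀ (t : List Bool) (A : List C), ∃ q ∈ Set.range e, q ∉ A ∧
      (∀ i, i < t.length → q i = t.getD i true) ∧ (∀ n ∈ X', t.length ≤ n → q n = true)) := by
  classical
  -- pattern realizers inside the families
  have hηex : ∀ t : List Bool, ∃ r, Set.EqOn (d r) (ptC t) (Set.Iio t.length) :=
    fun t => hdDense (ptC t) (ptC_memG hfre t) t.length
  have hθex : ∀ t : List Bool, ∃ r, Set.EqOn (e r) (ptC t) (Set.Iio t.length) :=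
    fun t => heDense (ptC t) (ptC_memG hfre t) t.length
  choose ηi hηi using hηex
  choose θi hθi using hθex
  -- enumeration of patterns
  set eL : ℕ → List Bool := fun n => (Encodable.decode (α := List Bool) n).getD [] with heL
  have heLsurj : ∀ t : List Bool, ∃ i, eL i = t := by
    intro t
    refine ⟨Encodable.encode t, ?_⟩
    rw [heL]
    simp [Encodable.encodek]
  -- pseudo-intersection
  have hstep : ∀ (W : ℕ → Set ℕ), (∀ n, W n ∈ G) → ∀ X0, X0 ∈ G →
      ∃ X1, X1 ∈ G ∧ X1 ⊆ X0 ∧ ∀ n, (X1 \ W n).Finite := by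
    intro W hW X0 hX0
    obtain ⟨Y, hY, hYfin⟩ := hP W hW
    refine ⟨X0 ∩ Y, inter_mem hfil hX0 hY, Set.inter_subset_left, fun n => ?_⟩
    exact (hYfin n).subset (fun x hx => ⟨hx.1.2, hx.2⟩)
  obtain ⟨Xa, hXaG, _, hXad⟩ := hstep (fun r => toSet (d r)) hdG Set.univ hfil.1
  obtain ⟨Xb, hXbG, hXbsub, hXbe⟩ := hstep (fun r => toSet (e r)) heG Xa hXaG
  obtain ⟨Xc, hXcG, hXcsub, hXcη⟩ := hstep (fun i => toSet (d (ηi (eL i)))) (fun i => hdG _) Xb hXbG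
  obtain ⟨X1, hX1G, hX1sub, hX1θit⟩ := hstep (fun i => toSet (e (θi (eL i)))) (fun i => heG _) Xc hXcG
  have hX1Xa : X1 ⊆ Xa := fun x hx => hXbsub (hXcsub (hX1sub hx))
  have hX1d : ∀ r, (X1 \ toSet (d r)).Finite :=
    fun r => (hXad r).subset (Set.diff_subset_diff_left hX1Xa)
  have hX1e : ∀ r, (X1 \ toSet (e r)).Finite :=
    fun r => (hXbe r).subset (Set.diff_subset_diff_left (fun x hx => hXcsub (hX1sub hx)))
  have hX1η : ∀ t, (X1 \ toSet (d (ηi t))).Finite := by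
    intro t
    obtain ⟨i, hi⟩ := heLsurj t
    rw [← hi]
    exact (hXcη i).subset (Set.diff_subset_diff_left hX1sub)
  have hX1θ : ∀ t, (X1 \ toSet (e (θi t))).Finite := by
    intro t
    obtain ⟨i, hi⟩ := heLsurj t
    rw [← hi]
    exact hX1θit i
  -- moduli
  have hMex : ∀ t : List Bool, ∃ bb, t.length < bb ∧
      ∀ n, bb ≤ n → n ∈ X1 → (d (ηi t) n = true ∧ e (θi t) n = true) := by
    intro t
    obtain ⟨b₁, hb₁⟩ := fin_bound ((hX1η t).union (hX1θ t))
    refine ⟨max b₁ (t.length + 1), lt_of_lt_of_le (Nat.lt_succ_self _) (le_max_right _ _), ?_⟩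
    intro n hn hnX1
    have hnb₁ : ¬ n < b₁ := by
      have := le_trans (le_max_left b₁ (t.length+1)) hn
      omega
    constructor
    · by_contra hcon
      exact hnb₁ (hb₁ n (Set.mem_union_left _ ⟨hnX1, fun hmem => hcon hmem⟩))
    · by_contra hcon
      exact hnb₁ (hb₁ n (Set.mem_union_right _ ⟨hnX1, fun hmem => hcon hmem⟩))
  choose Mf hMf1 hMf2 using hMex
  -- the extension operation on patterns
  set plus : List Bool → List Bool :=
    fun t => t ++ List.ofFn (fun i : Fin (Mf t - t.length) => decide ((t.length + (i:ℕ)) ∈ X1))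
    with hplus
  have hplen : ∀ t, (plus t).length = Mf t := by
    intro t
    rw [hplus]
    simp only [List.length_append, List.length_ofFn]
    have := hMf1 t
    omega
  have hplo : ∀ (t : List Bool) (n : ℕ), n < t.length → (plus t).getD n true = t.getD n true := by
    intro t n hn
    rw [hplus]
    exact List.getD_append _ _ _ _ hn
  have hphi : ∀ (t : List Bool) (n : ℕ), t.length ≤ n → n < Mf t →
      (plus t).getD n true = decide (n ∈ X1) := by
    intro t n h1 h2
    rw [hplus]
    rw [List.getD_append_right _ _ _ _ h1]
    have h3 : n - t.length < Mf t - t.length := by omega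
    rw [getD_ofFn _ h3]
    have h5 : t.length + (n - t.length) = n := by omega
    show decide ((t.length + (n - t.length)) ∈ X1) = decide (n ∈ X1)
    rw [h5]
  -- iterates
  set itf : ℕ → List Bool → List Bool := fun k t => (fun u => plus u)^[k] t with hitf
  have hit0 : ∀ t, itf 0 t = t := fun t => rfl
  have hitS : ∀ k t, itf (k+1) t = plus (itf k t) := by
    intro k t
    rw [hitf]
    exact Function.iterate_succ_apply' _ k t
  have hitlen_lt : ∀ (t : List Bool) (k : ℕ), (itf k t).length < (itf (k+1) t).length := by
    intro t k
    rw [hitS, hplen]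
    exact hMf1 _
  have hitmono : ∀ t : List Bool, StrictMono (fun k => (itf k t).length) :=
    fun t => strictMono_nat_of_lt_succ (hitlen_lt t)
  have hitlen_ge : ∀ (t : List Bool) (k : ℕ), t.length ≤ (itf k t).length := by
    intro t k
    have h := (hitmono t).monotone (Nat.zero_le k)
    simpa [hit0] using h
  have hitpre : ∀ (t : List Bool) (k : ℕ) (n : ℕ), n < t.length →
      (itf k t).getD n true = t.getD n true := by
    intro t k
    induction k with
    | zero => intro n _; rw [hit0]
    | succ k ih =>
      intro n hn
      rw [hitS, hplo _ n (lt_of_lt_of_le hn (hitlen_ge t k)), ih n hn]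
  have hitbits : ∀ (t : List Bool) (k : ℕ) (n : ℕ), t.length ≤ n → n < (itf k t).length →
      (itf k t).getD n true = decide (n ∈ X1) := by
    intro t k
    induction k with
    | zero =>
      intro n h1 h2
      rw [hit0] at h2
      omega
    | succ k ih =>
      intro n h1 h2
      rcases Nat.lt_or_ge n (itf k t).length with h3 | h3
      · rw [hitS, hplo _ n h3]
        exact ih n h1 h3
      · rw [hitS] at h2 ⊢
        rw [hplen] at h2
        exact hphi _ n h3 h2
  -- the interval partition
  have hkkex : ∀ (i m : ℕ), ∃ k, m ≤ (itf k (eL i)).length :=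
    fun i m => ⟨m, (hitmono (eL i)).le_apply⟩
  choose kk hkk using hkkex
  set g : ℕ → ℕ → ℕ :=
    fun p bp => (Finset.range (p+1)).sup (fun i => (itf (kk i bp + 1) (eL i)).length) with hg
  set b : ℕ → ℕ := recb g with hb
  have hb0 : b 0 = 0 := rfl
  have hbS : ∀ p, b (p+1) = max (b p + 1) (1 + g p (b p)) := fun _ => rfl
  have hbmono : StrictMono b := by
    apply strictMono_nat_of_lt_succ
    intro p
    rw [hbS]
    exact lt_of_lt_of_le (Nat.lt_succ_self _) (le_max_left _ _)
  have hbkey : ∀ p i, i ≤ p → (itf (kk i (b p) + 1) (eL i)).length < b (p+1) := by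
    intro p i hip
    have h1 : (itf (kk i (b p) + 1) (eL i)).length ≤ g p (b p) := by
      rw [hg]
      exact Finset.le_sup (f := fun i => (itf (kk i (b p) + 1) (eL i)).length) (Finset.mem_range.2 (Nat.lt_succ_of_le hip))
    have h2 : 1 + g p (b p) ≤ b (p+1) := by rw [hbS]; exact le_max_right _ _
    omega
  obtain ⟨Xg, hXgG, hXginf⟩ := hTAL b hbmono hb0
  set X' := Xg ∩ X1 with hX'
  have hX'G : X' ∈ G := inter_mem hfil hXgG hX1G
  have hX'X1 : X' ⊆ X1 := Set.inter_subset_right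
  have hX'Xg : X' ⊆ Xg := Set.inter_subset_left
  -- core realization lemma
  have core : ∀ (f : List Bool → C),
      (∀ t, Set.EqOn (f t) (ptC t) (Set.Iio t.length)) →
      (∀ t n, Mf t ≤ n → n ∈ X1 → f t n = true) →
      ∀ u : List Bool, ∃ v : List Bool, (∀ i, i < u.length → f v i = u.getD i true) ∧
        (∀ n, n ∈ X' → u.length ≤ n → f v n = true) := by
    intro f hfpre hfM u
    obtain ⟨i₀, hi₀⟩ := heLsurj u
    obtain ⟨p, hp, hpi⟩ := hXginf.exists_gt i₀
    set k := kk i₀ (b p) with hk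
    set v := itf k u with hv
    have hbpv : b p ≤ v.length := by
      rw [hv, ← hi₀]
      exact hkk i₀ (b p)
    have hulen : u.length ≤ v.length := hitlen_ge u k
    refine ⟨v, ?_, ?_⟩
    · intro i hi
      have h1 : f v i = (ptC v) i := hfpre v (Set.mem_Iio.2 (lt_of_lt_of_le hi hulen))
      rw [h1]
      show v.getD i true = u.getD i true
      rw [hv]
      exact hitpre u k i hi
    · intro n hnX' hn
      rcases Nat.lt_or_ge n v.length with h1 | h1
      · have h2 : f v n = (ptC v) n := hfpre v (Set.mem_Iio.2 h1)
        rw [h2]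
        show v.getD n true = true
        rw [hv, hitbits u k n hn (by rw [← hv]; exact h1)]
        simp [hX'X1 hnX']
      · rcases Nat.lt_or_ge n (Mf v) with h2 | h2
        · exfalso
          have h3 : Mf v = (itf (k+1) u).length := by rw [hitS, ← hv, hplen]
          have h4 := hbkey p i₀ (le_of_lt hpi)
          rw [hi₀] at h4
          have hnIco : n ∈ Set.Ico (b p) (b (p+1)) :=
            ⟨le_trans hbpv h1, by rw [← hk] at h4; omega⟩
          have hp' : Xg ∩ Set.Ico (b p) (b (p+1)) = ∅ := hp
          exact absurd (Set.mem_inter (hX'Xg hnX') hnIco)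
            (by rw [hp']; exact Set.notMem_empty n)
        · exact hfM v n h2 (hX'X1 hnX')
  -- realization avoiding a finite list
  have withA : ∀ (f : List Bool → C),
      (∀ t, Set.EqOn (f t) (ptC t) (Set.Iio t.length)) →
      (∀ t n, Mf t ≤ n → n ∈ X1 → f t n = true) →
      ∀ (u : List Bool) (A : List C), ∃ q : C, (∃ t, q = f t) ∧ q ∉ A ∧
        (∀ i, i < u.length → q i = u.getD i true) ∧ (∀ n, n ∈ X' → u.length ≤ n → q n = true) := by
    intro f hfpre hfM u A
    have hPnx : {n | ¬ n ∈ X' ∧ u.length ≤ n}.Infinite := by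
      apply infinite_of_unbdd
      intro N
      obtain ⟨p, hp, hpN⟩ := hXginf.exists_gt (max N u.length)
      have hbp : max N u.length ≤ b p := le_trans (le_of_lt hpN) hbmono.le_apply
      refine ⟨b p, le_trans (le_max_left _ _) hbp, ?_, le_trans (le_max_right _ _) hbp⟩
      intro hcon
      have h1 : b p ∈ Set.Ico (b p) (b (p+1)) := ⟨le_refl _, hbmono (Nat.lt_succ_self p)⟩
      have hp' : Xg ∩ Set.Ico (b p) (b (p+1)) = ∅ := hp
      exact absurd (Set.mem_inter (hX'Xg hcon) h1) (by rw [hp']; exact Set.notMem_empty _)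
    set P₀ : ℕ → Prop := fun n => ¬ n ∈ X' ∧ u.length ≤ n with hP₀
    set rr : ℕ → ℕ := fun j => Nat.nth P₀ j with hrr
    have hrrmem : ∀ j, ¬ (rr j) ∈ X' ∧ u.length ≤ rr j := fun j => Nat.nth_mem_of_infinite hPnx j
    have hrrmono : StrictMono rr := Nat.nth_strictMono hPnx
    set L₀ := rr A.length + 1 with hL₀
    have hrrlt : ∀ j, j ≤ A.length → rr j < L₀ := by
      intro j hj
      have := hrrmono.monotone hj
      omega
    have hulenL₀ : u.length < L₀ := lt_of_le_of_lt (hrrmem A.length).2 (Nat.lt_succ_self _)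
    set tj : ℕ → List Bool := fun j => List.ofFn
      (fun i : Fin L₀ => if (i:ℕ) < u.length then u.getD i true else decide (¬ (i:ℕ) = rr j))
      with htj
    have htjlen : ∀ j, (tj j).length = L₀ := by
      intro j
      rw [htj]
      exact List.length_ofFn
    have htjbits : ∀ (j : ℕ) (i : ℕ) (h : i < L₀), (tj j).getD i true =
        if i < u.length then u.getD i true else decide (¬ i = rr j) := by
      intro j i h
      rw [htj, getD_ofFn _ h]
    have hcand := fun j => core f hfpre hfM (tj j)
    choose vv hvv1 hvv2 using hcand
    set qq : ℕ → C := fun j => f (vv j) with hqq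
    have hqpre : ∀ (j : ℕ) (i : ℕ), i < u.length → qq j i = u.getD i true := by
      intro j i hi
      rw [hqq]
      show f (vv j) i = u.getD i true
      rw [hvv1 j i (by rw [htjlen]; omega), htjbits j i (by omega), if_pos hi]
    have hqmid : ∀ (j : ℕ) (i : ℕ), u.length ≤ i → i < L₀ → qq j i = decide (¬ i = rr j) := by
      intro j i h1 h2
      rw [hqq]
      show f (vv j) i = decide (¬ i = rr j)
      rw [hvv1 j i (by rw [htjlen]; omega), htjbits j i h2, if_neg (by omega)]
    have hqtr : ∀ (j : ℕ) (n : ℕ), n ∈ X' → u.length ≤ n → qq j n = true := by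
      intro j n hn h1
      rcases Nat.lt_or_ge n L₀ with h2 | h2
      · rw [hqmid j n h1 h2]
        have hne : n ≠ rr j := fun hcon => (hrrmem j).1 (hcon ▸ hn)
        simp [hne]
      · rw [hqq]
        show f (vv j) n = true
        exact hvv2 j n hn (by rw [htjlen]; omega)
    have hqinj : Function.Injective (fun j : Fin (A.length + 1) => qq (j : ℕ)) := by
      intro j j' hcon
      by_contra hne
      have hne' : (j : ℕ) ≠ (j' : ℕ) := fun hc => hne (Fin.ext hc)
      have e1 : qq (j : ℕ) (rr j) = false := by
        rw [hqmid _ (rr j) (hrrmem j).2 (hrrlt j (by omega))]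
        simp
      have e2 : qq (j' : ℕ) (rr j) = true := by
        rw [hqmid _ (rr j) (hrrmem j).2 (hrrlt j (by omega))]
        have : (rr (j:ℕ)) ≠ rr (j':ℕ) := fun hc => hne' (hrrmono.injective hc)
        simp [this]
      have hcon' : qq (j : ℕ) = qq (j' : ℕ) := hcon
      rw [hcon'] at e1
      rw [e1] at e2
      exact Bool.noConfusion e2
    obtain ⟨j, hj⟩ := avoid_list A _ hqinj
    exact ⟨qq (j : ℕ), ⟨vv (j : ℕ), rfl⟩, hj, fun i hi => hqpre _ i hi,
      fun n hn h1 => hqtr _ n hn h1⟩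
  -- assemble
  have Rd' := withA (fun t => d (ηi t)) hηi (fun t n h1 h2 => (hMf2 t n h1 h2).1)
  have Re' := withA (fun t => e (θi t)) hθi (fun t n h1 h2 => (hMf2 t n h1 h2).2)
  refine ⟨X', hX'G, ?_, ?_, ?_, ?_⟩
  · exact fun r => ((hX1d r).subset (Set.diff_subset_diff_left hX'X1))
  · exact fun r => ((hX1e r).subset (Set.diff_subset_diff_left hX'X1))
  · intro t A
    obtain ⟨q, ⟨t', hq⟩, hqA, hqpre, hqtr⟩ := Rd' t A
    exact ⟨q, ⟨ηi t', hq.symm⟩, hqA, hqpre, hqtr⟩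
  · intro t A
    obtain ⟨q, ⟨t', hq⟩, hqA, hqpre, hqtr⟩ := Re' t A
    exact ⟨q, ⟨θi t', hq.symm⟩, hqA, hqpre, hqtr⟩

end CDHAux
end
-- ================= Part 6: CDH for the filter copy =================
noncomputable section
namespace CDHAux
open Set

lemma dense_comb {G : Set (Set ℕ)} (E : Set ↥(cantorCopy G)) (hEd : Dense E) :
    ∀ z : C, toSet z ∈ G → ∀ m : ℕ, ∃ w ∈ E, Set.EqOn ((w : ↥(cantorCopy G)) : C) z (Set.Iio m) := by
  intro z hz m
  have hopen : IsOpen {w : ↥(cantorCopy G) | Set.EqOn (w : C) z (Set.Iio m)} :=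
    (cyl_open z m).preimage continuous_subtype_val
  have hne : Set.Nonempty {w : ↥(cantorCopy G) | Set.EqOn (w : C) z (Set.Iio m)} :=
    ⟨⟨z, hz⟩, fun n _ => rfl⟩
  obtain ⟨w, hw1, hw2⟩ := hEd.inter_open_nonempty _ hopen hne
  exact ⟨w, hw2, hw1⟩

theorem main_cdh {G : Set (Set ℕ)} (hfil : IsFilterOn G) (hfre : ExtendsFrechet G)
    (hP : IsPFilterOn G)
    (hTAL : ∀ b : ℕ → ℕ, StrictMono b → b 0 = 0 →
      ∃ X ∈ G, {p | X ∩ Set.Ico (b p) (b (p+1)) = ∅}.Infinite) :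
    CDH ↥(cantorCopy G) := by
  intro D E hDc hDd hEc hEd
  classical
  have hunivG : toSet (fun _ : ℕ => true) ∈ G := by
    have h1 : toSet (fun _ : ℕ => true) = Set.univ := by
      ext n
      simp [toSet]
    rw [h1]
    exact hfil.1
  haveI : Nonempty ↥(cantorCopy G) := ⟨⟨fun _ => true, hunivG⟩⟩
  obtain ⟨d₀, hd₀⟩ := hDc.exists_eq_range hDd.nonempty
  obtain ⟨e₀, he₀⟩ := hEc.exists_eq_range hEd.nonempty
  set d : ℕ → C := fun r => (d₀ r : C) with hd
  set e : ℕ → C := fun r => (e₀ r : C) with he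
  have hdG : ∀ r, toSet (d r) ∈ G := fun r => (d₀ r).2
  have heG : ∀ r, toSet (e r) ∈ G := fun r => (e₀ r).2
  have hdDense : ∀ z : C, toSet z ∈ G → ∀ m : ℕ, ∃ r, Set.EqOn (d r) z (Set.Iio m) := by
    intro z hz m
    obtain ⟨w, hwD, hwEq⟩ := dense_comb D hDd z hz m
    rw [hd₀] at hwD
    obtain ⟨r, hr⟩ := hwD
    refine ⟨r, ?_⟩
    rw [hd]
    show Set.EqOn ((d₀ r : C)) z (Set.Iio m)
    rw [hr]
    exact hwEq
  have heDense : ∀ z : C, toSet z ∈ G → ∀ m : ℕ, ∃ r, Set.EqOn (e r) z (Set.Iio m) := by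
    intro z hz m
    obtain ⟨w, hwE, hwEq⟩ := dense_comb E hEd z hz m
    rw [he₀] at hwE
    obtain ⟨r, hr⟩ := hwE
    refine ⟨r, ?_⟩
    rw [he]
    show Set.EqOn ((e₀ r : C)) z (Set.Iio m)
    rw [hr]
    exact hwEq
  obtain ⟨X', hX'G, hX'd, hX'e, Rd, Re⟩ :=
    build_ctx hfil hfre hP hTAL d e hdG heG hdDense heDense
  obtain ⟨h, hGiff, himg⟩ := ctx_main ⟨G, hfil, d, e, hdG, heG, X', hX'G, hX'd, hX'e, Rd, Re⟩
  have hrange_d : Set.range d = Subtype.val '' D := by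
    rw [hd₀, hd]
    exact (Set.range_comp _ _).symm ▸ Set.range_comp Subtype.val d₀
  have hrange_e : Set.range e = Subtype.val '' E := by
    rw [he₀, he]
    exact Set.range_comp Subtype.val e₀
  have himg' : (⇑h) '' (Subtype.val '' D) = Subtype.val '' E := by
    rw [← hrange_d, ← hrange_e]
    exact himg
  have hpres : ∀ z : ↥(cantorCopy G), h (z : C) ∈ cantorCopy G :=
    fun z => (hGiff (z : C)).1 z.2
  have hpres' : ∀ z : ↥(cantorCopy G), h.symm (z : C) ∈ cantorCopy G := by
    intro z
    have h1 := hGiff (h.symm (z : C))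
    rw [h.apply_symm_apply] at h1
    exact h1.2 z.2
  set hsub : ↥(cantorCopy G) ≃ₜ ↥(cantorCopy G) :=
    { toFun := fun z => ⟨h (z : C), hpres z⟩
      invFun := fun z => ⟨h.symm (z : C), hpres' z⟩
      left_inv := fun z => Subtype.ext (h.symm_apply_apply (z : C))
      right_inv := fun z => Subtype.ext (h.apply_symm_apply (z : C))
      continuous_toFun :=
        Continuous.subtype_mk (h.continuous.comp continuous_subtype_val) _
      continuous_invFun :=
        Continuous.subtype_mk (h.symm.continuous.comp continuous_subtype_val) _ } with hsubdef
  refine ⟨hsub, ?_⟩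
  apply Set.Subset.antisymm
  · rintro w ⟨z, hz, rfl⟩
    have h1 : h (z : C) ∈ (⇑h) '' (Subtype.val '' D) :=
      Set.mem_image_of_mem _ (Set.mem_image_of_mem _ hz)
    rw [himg'] at h1
    obtain ⟨u, huE, hu⟩ := h1
    have : hsub z = u := Subtype.ext (by rw [hu]; rfl)
    rw [this]
    exact huE
  · intro w hw
    have h1 : (w : C) ∈ (⇑h) '' (Subtype.val '' D) := by
      rw [himg']
      exact Set.mem_image_of_mem _ hw
    obtain ⟨cpt, hcpt, hch⟩ := h1
    obtain ⟨z, hz, rfl⟩ := hcpt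
    refine ⟨z, hz, ?_⟩
    exact Subtype.ext (by rw [← hch]; rfl)

end CDHAux
end
-- ================= Part 7: Talagrand (easy direction) =================
noncomputable section
namespace CDHAux
open Set

lemma nwd_isMeagre {X : Type*} [TopologicalSpace X] {s : Set X} (h : IsNowhereDense s) :
    IsMeagre s :=
  isMeagre_iff_countable_union_isNowhereDense.2
    ⟨{s}, by simpa using h, Set.countable_singleton s, by simp⟩

lemma tal_easy {F : Set (Set ℕ)} (hNM : NonMeagerFamily F) :
    ∀ a : ℕ → ℕ, StrictMono a → a 0 = 0 →
      ∃ B ∈ F, {p | B ∩ Set.Ico (a p) (a (p+1)) = ∅}.Infinite := by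
  classical
  intro a hmono h0
  by_contra hcon
  push_neg at hcon
  apply hNM
  set N : ℕ → Set C := fun q =>
    {x : C | ∀ p, q ≤ p → ∃ n ∈ Set.Ico (a p) (a (p+1)), x n = true} with hN
  have hsub : cantorCopy F ⊆ ⋃ q, N q := by
    intro x hx
    have hfin : {p | toSet x ∩ Set.Ico (a p) (a (p+1)) = ∅}.Finite :=
      hcon (toSet x) hx
    obtain ⟨q, hq⟩ := fin_bound hfin
    refine Set.mem_iUnion.2 ⟨q, ?_⟩
    intro p hp
    by_contra hc2
    push_neg at hc2
    have hpmem : p ∈ {p | toSet x ∩ Set.Ico (a p) (a (p+1)) = ∅} := by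
      rw [Set.mem_setOf_eq, Set.eq_empty_iff_forall_notMem]
      rintro n ⟨hn1, hn2⟩
      have h5 : ¬ (x n = true) := hc2 n hn2
      exact h5 hn1
    have := hq p hpmem
    omega
  have hmeag : ∀ q, IsMeagre (N q) := by
    intro q
    have hclosed : IsClosed (N q) := by
      have hNeq : N q = ⋂ p, ⋂ (_ : q ≤ p), (⋃ n ∈ Set.Ico (a p) (a (p+1)), {x : C | x n = true}) := by
        ext x
        simp [hN]
      rw [hNeq]
      apply isClosed_iInter
      intro p
      apply isClosed_iInter
      intro _
      apply (Set.finite_Ico _ _).isClosed_biUnion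
      intro n _
      exact IsClosed.preimage (continuous_apply n) isClosed_singleton
    have hint : interior (N q) = ∅ := by
      rw [Set.eq_empty_iff_forall_notMem]
      intro x hx
      obtain ⟨I, u, hu, hIsub⟩ := isOpen_pi_iff.1 isOpen_interior x hx
      set m := (I.sup id) + 1 with hm
      set p := max q m with hp
      have hIlt : ∀ i ∈ I, (i : ℕ) < a p := by
        intro i hi
        have h1 : i ≤ I.sup id := Finset.le_sup (f := id) hi
        have h2 : m ≤ a m := hmono.le_apply
        have h3 : a m ≤ a p := hmono.monotone (le_max_right _ _)
        omega
      set x' : C := fun n => if n ∈ Set.Ico (a p) (a (p+1)) then false else x n with hx'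
      have hx'mem : x' ∈ (I : Set ℕ).pi u := by
        intro i hi
        have h6 : x' i = x i := by
          show (if i ∈ Set.Ico (a p) (a (p+1)) then false else x i) = x i
          have h7 := hIlt i hi
          rw [if_neg (by rw [Set.mem_Ico]; omega)]
        rw [h6]
        exact (hu i hi).2
      have hx'N : x' ∈ N q := interior_subset (hIsub hx'mem)
      obtain ⟨n, hn1, hn2⟩ := hx'N p (le_max_left _ _)
      have hn2' : (if n ∈ Set.Ico (a p) (a (p+1)) then false else x n) = true := hn2
      rw [if_pos hn1] at hn2'
      exact Bool.noConfusion hn2'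
    exact nwd_isMeagre (hclosed.isNowhereDense_iff.2 hint)
  exact (isMeagre_iUnion hmeag).mono hsub

end CDHAux
end
-- ================= Part 8: the product filter and the final assembly =================
noncomputable section
namespace CDHAux
open Set

lemma dense_image_homeo {X Y : Type*} [TopologicalSpace X] [TopologicalSpace Y]
    (Φ : X ≃ₜ Y) {s : Set X} (hs : Dense s) : Dense (⇑Φ '' s) := by
  rw [dense_iff_closure_eq, ← Homeomorph.image_closure, dense_iff_closure_eq.1 hs,
    Set.image_univ, Φ.surjective.range_eq]

lemma cdh_homeo {X Y : Type*} [TopologicalSpace X] [TopologicalSpace Y]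
    (Φ : X ≃ₜ Y) (hX : CDH X) : CDH Y := by
  intro D E hDc hDd hEc hEd
  obtain ⟨g, hg⟩ := hX (⇑Φ.symm '' D) (⇑Φ.symm '' E) (hDc.image _) (dense_image_homeo Φ.symm hDd)
    (hEc.image _) (dense_image_homeo Φ.symm hEd)
  refine ⟨(Φ.symm.trans g).trans Φ, ?_⟩
  have hcoe : ⇑((Φ.symm.trans g).trans Φ) = ⇑Φ ∘ (⇑g ∘ ⇑Φ.symm) := rfl
  rw [hcoe, Set.image_comp, Set.image_comp, hg, ← Set.image_comp]
  have h2 : ⇑Φ ∘ ⇑Φ.symm = id := by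
    funext y
    exact Φ.apply_symm_apply y
  rw [h2, Set.image_id]

/-- the "column" of a subset of ℕ through the pairing bijection -/
def pcol (j : ℕ) (A : Set ℕ) : Set ℕ := {m | Nat.pairEquiv (j, m) ∈ A}

/-- the countable Fubini-style power of `F`, as a filter on ℕ -/
def G1 (F : Set (Set ℕ)) : Set (Set ℕ) := {A | ∀ j : ℕ, pcol j A ∈ F}

lemma pcol_preim (j : ℕ) (A : Set ℕ) : pcol j A = (fun m => Nat.pairEquiv (j, m)) ⁻¹' A := rfl

lemma pcol_inj (j : ℕ) : Function.Injective (fun m => Nat.pairEquiv (j, m)) := by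
  intro m m' h
  have h2 := Nat.pairEquiv.injective h
  exact (Prod.ext_iff.1 h2).2

lemma G1_filter {F : Set (Set ℕ)} (hF : IsFilterOn F) : IsFilterOn (G1 F) := by
  refine ⟨fun j => ?_, fun hcon => ?_, fun A B hA hB j => ?_, fun A B hA hAB j => ?_⟩
  · have : pcol j Set.univ = Set.univ := rfl
    rw [this]
    exact hF.1
  · have h0 : pcol 0 (∅ : Set ℕ) = ∅ := rfl
    exact hF.2.1 (h0 ▸ hcon 0)
  · have : pcol j (A ∩ B) = pcol j A ∩ pcol j B := rfl
    rw [this]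
    exact hF.2.2.1 _ _ (hA j) (hB j)
  · exact hF.2.2.2 _ _ (hA j) (fun m hm => hAB hm)

lemma G1_frechet {F : Set (Set ℕ)} (hF : IsFilterOn F) (hfre : ExtendsFrechet F) :
    ExtendsFrechet (G1 F) := by
  intro A hA j
  apply hfre
  have : (pcol j A)ᶜ = (fun m => Nat.pairEquiv (j, m)) ⁻¹' Aᶜ := rfl
  rw [this]
  exact hA.preimage ((pcol_inj j).injOn)

lemma filter_biInter {F : Set (Set ℕ)} (hF : IsFilterOn F) (Z : ℕ → Set ℕ)
    (hZ : ∀ i, Z i ∈ F) : ∀ k, (⋂ i ∈ Finset.range k, Z i) ∈ F := by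
  intro k
  induction k with
  | zero => simpa using hF.1
  | succ k ih =>
    have h1 : (⋂ i ∈ Finset.range (k+1), Z i) = Z k ∩ ⋂ i ∈ Finset.range k, Z i := by
      rw [Finset.range_add_one]
      simp [Set.biInter_insert]
    rw [h1]
    exact hF.2.2.1 _ _ (hZ k) ih

lemma G1_pfilter {F : Set (Set ℕ)} (hF : IsFilterOn F) (hfre : ExtendsFrechet F)
    (hP : IsPFilterOn F) : IsPFilterOn (G1 F) := by
  intro A hA
  classical
  set pe := Nat.pairEquiv with hpe
  set W : ℕ → Set ℕ := fun n => pcol (pe.symm n).2 (A (pe.symm n).1) with hW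
  have hWF : ∀ n, W n ∈ F := fun n => hA _ _
  obtain ⟨Y, hYF, hYfin⟩ := hP W hWF
  have hYfin' : ∀ k j, (Y \ pcol j (A k)).Finite := by
    intro k j
    have h1 := hYfin (pe (k, j))
    have h2 : W (pe (k, j)) = pcol j (A k) := by
      rw [hW]
      simp
    rwa [h2] at h1
  set B : ℕ → Set ℕ := fun j => Y ∩ ⋂ k ∈ Finset.range (j+1), pcol j (A k) with hB
  have hBF : ∀ j, B j ∈ F := by
    intro j
    exact hF.2.2.1 _ _ hYF (filter_biInter hF _ (fun k => hA k j) (j+1))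
  set X₁ : Set ℕ := {n | (pe.symm n).2 ∈ B (pe.symm n).1} with hX₁
  have hcolX₁ : ∀ j, pcol j X₁ = B j := by
    intro j
    ext m
    show (pe.symm (pe (j, m))).2 ∈ B (pe.symm (pe (j, m))).1 ↔ m ∈ B j
    simp
  refine ⟨X₁, fun j => by rw [hcolX₁ j]; exact hBF j, ?_⟩
  intro k
  have hsub : X₁ \ A k ⊆ ⋃ j ∈ Finset.range k, (fun m => pe (j, m)) '' (Y \ pcol j (A k)) := by
    rintro n ⟨hn1, hn2⟩
    set j := (pe.symm n).1 with hj
    set m := (pe.symm n).2 with hm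
    have hnpe : pe (j, m) = n := by
      rw [hj, hm]
      have : ((pe.symm n).1, (pe.symm n).2) = pe.symm n := rfl
      rw [this]
      exact pe.apply_symm_apply n
    have hmB : m ∈ B j := hn1
    have hmY : m ∈ Y := hmB.1
    have hmnotA : m ∉ pcol j (A k) := by
      intro hc
      apply hn2
      have : pe (j, m) ∈ A k := hc
      rwa [hnpe] at this
    have hjk : j < k := by
      by_contra hge
      rw [Nat.not_lt] at hge
      have h4 := hmB.2
      rw [Set.mem_iInter₂] at h4
      exact hmnotA (h4 k (Finset.mem_range.2 (Nat.lt_succ_of_le hge)))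
    refine Set.mem_biUnion (Finset.mem_range.2 hjk) ?_
    exact ⟨m, ⟨hmY, hmnotA⟩, hnpe⟩
  apply Set.Finite.subset _ hsub
  apply Set.Finite.biUnion (Finset.finite_toSet _)
  intro j _
  exact (hYfin' k j).image _

lemma G1_tal {F : Set (Set ℕ)} (hF : IsFilterOn F) (hfre : ExtendsFrechet F)
    (hNM : NonMeagerFamily F) :
    ∀ bb : ℕ → ℕ, StrictMono bb → bb 0 = 0 →
      ∃ X ∈ G1 F, {p | X ∩ Set.Ico (bb p) (bb (p+1)) = ∅}.Infinite := by
  classical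
  intro bb hbmono hb0
  set pe := Nat.pairEquiv with hpe
  set J : ℕ → Set ℕ := fun p => Set.Ico (bb p) (bb (p+1)) with hJ
  -- the unique interval index
  set idx : ℕ → ℕ := fun i => Nat.findGreatest (fun p => bb p ≤ i) i with hidx
  have hidx1 : ∀ i, bb (idx i) ≤ i := by
    intro i
    exact Nat.findGreatest_spec (P := fun p => bb p ≤ i) (Nat.zero_le i)
      (show bb 0 ≤ i by rw [hb0]; exact Nat.zero_le i)
  have hidx2 : ∀ i, i < bb (idx i + 1) := by
    intro i
    by_contra hc
    rw [Nat.not_lt] at hc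
    have h1 : idx i + 1 ≤ i := le_trans hbmono.le_apply hc
    have h2 := Nat.le_findGreatest (P := fun p => bb p ≤ i) h1 hc
    have h3 : idx i + 1 ≤ idx i := h2
    omega
  have hidxuniq : ∀ i p, i ∈ J p → p = idx i := by
    intro i p hip
    rw [hJ] at hip
    rcases Nat.lt_trichotomy p (idx i) with h | h | h
    · exfalso
      have : bb (p+1) ≤ bb (idx i) := hbmono.monotone (by omega)
      have := hidx1 i
      rw [Set.mem_Ico] at hip
      omega
    · exact h
    · exfalso
      have : bb (idx i + 1) ≤ bb p := hbmono.monotone (by omega)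
      have := hidx2 i
      rw [Set.mem_Ico] at hip
      omega
  -- columns of intervals
  set T : ℕ → ℕ → Set ℕ := fun j n => {m | pe (j, m) ∈ J n} with hT
  have hTfin : ∀ j n, (T j n).Finite := by
    intro j n
    exact ((Set.finite_Ico (bb n) (bb (n+1))).preimage
      (f := fun m => pe (j, m)) ((pcol_inj j).injOn))
  set SS : ℕ → ℕ → Set ℕ := fun n k => {m | ∃ j, j ≤ k ∧ pe (j, m) ∈ J n} with hSS
  have hSSsub : ∀ n k, SS n k ⊆ ⋃ j ∈ Finset.range (k+1), T j n := by
    rintro n k m ⟨j, hj1, hj2⟩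
    exact Set.mem_biUnion (Finset.mem_range.2 (by omega)) hj2
  have hSSfin : ∀ n k, (SS n k).Finite := by
    intro n k
    exact Set.Finite.subset (Set.Finite.biUnion (Finset.finite_toSet _) (fun j _ => hTfin j n))
      (hSSsub n k)
  -- the step existence
  have hbadfin : ∀ (ap p : ℕ), {n | ∃ m, m < ap ∧ m ∈ SS n p}.Finite := by
    intro ap p
    apply Set.Finite.subset
      (Set.Finite.biUnion (Set.finite_Iio ap)
        (fun m _ => Set.Finite.biUnion (Set.finite_Iic p) (fun j _ => Set.finite_singleton (idx (pe (j, m))))))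
    rintro n ⟨m, hm1, j, hj1, hj2⟩
    refine Set.mem_biUnion hm1 (Set.mem_biUnion (Set.mem_Iic.2 hj1) ?_)
    exact Set.mem_singleton_iff.2 (hidxuniq _ n hj2)
  have hstepex : ∀ (ap νprev p : ℕ), ∃ n, νprev < n ∧ ∀ m, m < ap → m ∉ SS n p := by
    intro ap νprev p
    obtain ⟨bd, hbd⟩ := fin_bound (hbadfin ap p)
    refine ⟨max (νprev + 1) bd, by omega, ?_⟩
    intro m hm hmem
    have : max (νprev + 1) bd ∈ {n | ∃ m, m < ap ∧ m ∈ SS n p} := ⟨m, hm, hmem⟩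
    have := hbd _ this
    omega
  -- the recursion
  set st : ℕ → ℕ × ℕ := fun p => Nat.rec
    (0, (hstepex 0 0 0).choose)
    (fun p' prev =>
      ((max (prev.1 + 1) ((fin_bound (hSSfin prev.2 p')).choose),
        (hstepex (max (prev.1 + 1) ((fin_bound (hSSfin prev.2 p')).choose)) prev.2 (p'+1)).choose)))
    p with hst
  set aa : ℕ → ℕ := fun p => (st p).1 with haa
  set ν : ℕ → ℕ := fun p => (st p).2 with hν
  have hst0 : st 0 = (0, (hstepex 0 0 0).choose) := rfl
  have hstS : ∀ p, st (p+1) =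
      (max ((st p).1 + 1) ((fin_bound (hSSfin (st p).2 p)).choose),
       (hstepex (max ((st p).1 + 1) ((fin_bound (hSSfin (st p).2 p)).choose)) (st p).2 (p+1)).choose) :=
    fun p => rfl
  have hgap : ∀ p, ∀ m, m < aa p → m ∉ SS (ν p) p := by
    intro p
    cases p with
    | zero => exact (hstepex 0 0 0).choose_spec.2
    | succ p' =>
      have h1 := (hstepex (max ((st p').1 + 1) ((fin_bound (hSSfin (st p').2 p')).choose)) (st p').2 (p'+1)).choose_spec.2
      intro m hm
      exact h1 m hm
  have hνmono : StrictMono ν := by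
    apply strictMono_nat_of_lt_succ
    intro p
    exact (hstepex (max ((st p).1 + 1) ((fin_bound (hSSfin (st p).2 p)).choose)) (st p).2 (p+1)).choose_spec.1
  have hbound : ∀ p, ∀ m ∈ SS (ν p) p, m < aa (p+1) := by
    intro p m hm
    have h1 := (fin_bound (hSSfin (st p).2 p)).choose_spec m hm
    exact lt_of_lt_of_le h1 (le_trans (Nat.le_max_right _ _) (le_refl _))
  -- apply the easy Talagrand lemma to F with intervals (aa)
  have haamono : StrictMono aa := by
    apply strictMono_nat_of_lt_succ
    intro p
    exact lt_of_lt_of_le (Nat.lt_succ_self _) (Nat.le_max_left _ _)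
  have haa0 : aa 0 = 0 := rfl
  obtain ⟨B, hBF, hBinf⟩ := tal_easy hNM aa haamono haa0
  set Q : ℕ → Prop := fun p => B ∩ Set.Ico (aa p) (aa (p+1)) = ∅ with hQ
  have hQinf : (setOf Q).Infinite := hBinf
  set qf : ℕ → ℕ := fun i => Nat.nth Q i with hqf
  have hqfmem : ∀ i, B ∩ Set.Ico (aa (qf i)) (aa (qf i + 1)) = ∅ :=
    fun i => Nat.nth_mem_of_infinite hQinf i
  have hqfmono : StrictMono qf := Nat.nth_strictMono hQinf
  -- the columns of the witness
  set sl : ℕ → Set ℕ := fun j => B ∩ ⋃ i ∈ Finset.range j, T j (ν (qf i)) with hsl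
  have hslfin : ∀ j, (sl j).Finite := by
    intro j
    apply Set.Finite.inter_of_right
    exact Set.Finite.biUnion (Finset.finite_toSet _) (fun i _ => hTfin _ _)
  set Bc : ℕ → Set ℕ := fun j => B \ sl j with hBc
  have hBcF : ∀ j, Bc j ∈ F := fun j => diff_fin_mem hF hfre hBF (hslfin j)
  set X : Set ℕ := {n | (pe.symm n).2 ∈ Bc (pe.symm n).1} with hX
  have hXG1 : X ∈ G1 F := by
    intro j
    have : pcol j X = Bc j := by
      ext m
      show (pe.symm (pe (j, m))).2 ∈ Bc (pe.symm (pe (j, m))).1 ↔ m ∈ Bc j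
      simp
    rw [this]
    exact hBcF j
  refine ⟨X, hXG1, ?_⟩
  have hkey : ∀ i, X ∩ J (ν (qf i)) = ∅ := by
    intro i
    rw [Set.eq_empty_iff_forall_notMem]
    rintro n ⟨hn1, hn2⟩
    set j := (pe.symm n).1 with hj
    set m := (pe.symm n).2 with hm
    have hnpe : pe (j, m) = n := by
      rw [hj, hm]
      have h9 : ((pe.symm n).1, (pe.symm n).2) = pe.symm n := rfl
      rw [h9]
      exact pe.apply_symm_apply n
    have hmBc : m ∈ Bc j := hn1
    have hmT : m ∈ T j (ν (qf i)) := by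
      rw [hT]
      show pe (j, m) ∈ J (ν (qf i))
      rw [hnpe]
      exact hn2
    rcases le_or_gt j (qf i) with hle | hgt
    · -- m lands in the cleared zone of B
      have hmSS : m ∈ SS (ν (qf i)) (qf i) := ⟨j, hle, hmT⟩
      have h1 : ¬ m < aa (qf i) := fun hc => hgap (qf i) m hc hmSS
      have h2 : m < aa (qf i + 1) := hbound (qf i) m hmSS
      have h3 : m ∈ B ∩ Set.Ico (aa (qf i)) (aa (qf i + 1)) :=
        ⟨hmBc.1, ⟨by omega, h2⟩⟩
      rw [hqfmem i] at h3
      exact h3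
    · -- m was removed from column j
      have hiq : i < j := lt_of_le_of_lt (hqfmono.le_apply) hgt
      apply hmBc.2
      exact ⟨hmBc.1, Set.mem_biUnion (Finset.mem_range.2 hiq) hmT⟩
  apply Set.infinite_of_injective_forall_mem
    (f := fun i => ν (qf i)) ((hνmono.comp hqfmono).injective)
  intro i
  exact hkey i

end CDHAux
end
-- ================= Part 9: packing homeomorphism and the theorem =================
noncomputable section
namespace CDHAux
open Set

def packHomeo (F : Set (Set ℕ)) : (ℕ → ↥(cantorCopy F)) ≃ₜ ↥(cantorCopy (G1 F)) where
  toFun x := ⟨fun n => (x (Nat.pairEquiv.symm n).1 : C) (Nat.pairEquiv.symm n).2, by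
    intro j
    have h1 : pcol j (toSet (fun n => (x (Nat.pairEquiv.symm n).1 : C) (Nat.pairEquiv.symm n).2))
        = toSet ((x j : C)) := by
      ext m
      show (x (Nat.pairEquiv.symm (Nat.pairEquiv (j, m))).1 : C)
          (Nat.pairEquiv.symm (Nat.pairEquiv (j, m))).2 = true ↔ _
      rw [Nat.pairEquiv.symm_apply_apply]
      exact Iff.rfl
    rw [h1]
    exact (x j).2⟩
  invFun y j := ⟨fun m => (y : C) (Nat.pairEquiv (j, m)), y.2 j⟩
  left_inv x := by
    funext j
    apply Subtype.ext
    funext m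
    show (x (Nat.pairEquiv.symm (Nat.pairEquiv (j, m))).1 : C)
        (Nat.pairEquiv.symm (Nat.pairEquiv (j, m))).2 = (x j : C) m
    rw [Nat.pairEquiv.symm_apply_apply]
  right_inv y := by
    apply Subtype.ext
    funext n
    show (y : C) (Nat.pairEquiv ((Nat.pairEquiv.symm n).1, (Nat.pairEquiv.symm n).2)) = (y : C) n
    have h1 : ((Nat.pairEquiv.symm n).1, (Nat.pairEquiv.symm n).2) = Nat.pairEquiv.symm n := rfl
    rw [h1, Nat.pairEquiv.apply_symm_apply]
  continuous_toFun := by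
    apply Continuous.subtype_mk
    apply continuous_pi
    intro n
    exact (continuous_apply (Nat.pairEquiv.symm n).2).comp
      (continuous_subtype_val.comp (continuous_apply (Nat.pairEquiv.symm n).1))
  continuous_invFun := by
    apply continuous_pi
    intro j
    apply Continuous.subtype_mk
    apply continuous_pi
    intro m
    exact (continuous_apply (Nat.pairEquiv (j, m))).comp continuous_subtype_val

end CDHAux
end

/-- If `F` is a non-meager P-filter on `ω` extending the Fréchet filter, then the
countable power `F^ω` is countable dense homogeneous. -/
theorem stmt1 (F : Set (Set ℕ)) (hF : IsFilterOn F) (hFr : ExtendsFrechet F)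
    (hP : IsPFilterOn F) (hNM : NonMeagerFamily F) :
    CDH (ℕ → ↥(cantorCopy F)) := by
  have h1 : CDH ↥(cantorCopy (CDHAux.G1 F)) :=
    CDHAux.main_cdh (CDHAux.G1_filter hF) (CDHAux.G1_frechet hF hFr)
      (CDHAux.G1_pfilter hF hFr hP) (CDHAux.G1_tal hF hFr hNM)
  exact CDHAux.cdh_homeo (CDHAux.packHomeo F).symm h1
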